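/- Let μ and ν be Borel probability measures on ℝ with characteristic functions φ_μ(s) = ∫ e^{i s x} dμ(x) and φ_ν(s) = ∫ e^{i s x} dν(x). Let q > 0 and suppose that ∫₀^q |φ_μ(s) − φ_ν(s)| / s ds < ∞ and ∫_q^∞ (|φ_μ(s)| + |φ_ν(s)|) / s ds < ∞. Then for every t ∈ ℝ with μ({t}) = 0 and ν({t}) = 0, |μ((−∞, t]) − ν((−∞, t])| ≤ (1/π) ∫₀^q |φ_μ(s) − φ_ν(s)| / s ds + (1/π) ∫_q^∞ (|φ_μ(s)| + |φ_ν(s)|) / s ds. -/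

import Mathlib

open MeasureTheory Set Filter Real

namespace GilPelaezAux

/-- The sine cardinal bound. -/
lemma sinc_abs_le_one (s : ℝ) : |Real.sin s / s| ≤ 1 := by
  rcases eq_or_ne s 0 with h | h
  · simp [h]
  · rw [abs_div, div_le_one (abs_pos.mpr h)]
    exact abs_sin_le_abs

lemma sinc_measurable : Measurable (fun s : ℝ => Real.sin s / s) :=
  (Real.measurable_sin).div measurable_id

lemma sinc_intervalIntegrable (a b : ℝ) :
    IntervalIntegrable (fun s : ℝ => Real.sin s / s) volume a b := by
  refine IntervalIntegrable.mono_fun'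
    (g := fun _ => (1:ℝ)) (intervalIntegrable_const)
    sinc_measurable.aestronglyMeasurable ?_
  filter_upwards with s
  simpa [Real.norm_eq_abs, abs_div] using sinc_abs_le_one s

/-- The sine integral. -/
noncomputable def Si (T : ℝ) : ℝ := ∫ s in (0:ℝ)..T, Real.sin s / s

lemma Si_zero : Si 0 = 0 := intervalIntegral.integral_same

lemma Si_continuous : Continuous Si :=
  intervalIntegral.continuous_primitive sinc_intervalIntegrable 0

/-- Antiderivative computation: `∫ s in 0..T, sin s * exp (-(u*s)) ds`. -/
lemma integral_sin_mul_exp (u T : ℝ) :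
    ∫ s in (0:ℝ)..T, Real.sin s * Real.exp (-(u*s))
      = (1 - Real.exp (-(u*T)) * (Real.cos T + u * Real.sin T)) / (1 + u^2) := by
  have hu2 : (0:ℝ) < 1 + u^2 := by positivity
  have key : ∀ s : ℝ, HasDerivAt
      (fun s : ℝ => -(Real.exp (-(u*s)) * (Real.cos s + u * Real.sin s)) / (1 + u^2))
      (Real.sin s * Real.exp (-(u*s))) s := by
    intro s
    have h1 : HasDerivAt (fun s : ℝ => Real.exp (-(u*s))) (-u * Real.exp (-(u*s))) s := by
      have := (Real.hasDerivAt_exp (-(u*s))).comp s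
        (((hasDerivAt_id s).const_mul u).neg)
      exact this.congr_deriv (by ring)
    have h2 : HasDerivAt (fun s : ℝ => Real.cos s + u * Real.sin s)
        (-Real.sin s + u * Real.cos s) s :=
      (Real.hasDerivAt_cos s).add ((Real.hasDerivAt_sin s).const_mul u)
    have h3 := ((h1.mul h2).neg).div_const (1 + u^2)
    refine h3.congr_deriv ?_
    field_simp
    ring
  rw [intervalIntegral.integral_eq_sub_of_hasDerivAt (fun s _ => key s) ?_]
  · simp only [neg_zero, mul_zero, Real.exp_zero, Real.sin_zero, Real.cos_zero]
    field_simp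
    ring
  · apply Continuous.intervalIntegrable
    exact Real.continuous_sin.mul (Real.continuous_exp.comp (continuous_const.mul continuous_id).neg)

lemma integral_exp_neg_Ioi_mul {s : ℝ} (hs : 0 < s) :
    ∫ u in Ioi (0:ℝ), Real.exp (-(u*s)) = 1/s := by
  have := MeasureTheory.integral_comp_mul_left_Ioi (fun x => Real.exp (-x)) 0 hs
  simp only [mul_zero, integral_exp_neg_Ioi] at this
  calc ∫ u in Ioi (0:ℝ), Real.exp (-(u*s)) = ∫ u in Ioi (0:ℝ), Real.exp (-(s*u)) := by
        simp [mul_comm]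
    _ = 1/s := by rw [this]; simp [smul_eq_mul, one_div]

/-- For `s > 0`, `sin s / s = ∫ u in Ioi 0, sin s * exp (-(u*s)) du`. -/
lemma sinc_eq_integral {s : ℝ} (hs : 0 < s) :
    Real.sin s / s = ∫ u in Ioi (0:ℝ), Real.sin s * Real.exp (-(u*s)) := by
  rw [integral_const_mul, integral_exp_neg_Ioi_mul hs]
  ring

set_option maxHeartbeats 1000000 in
/-- Fubini step: formula for `Si T`. -/
lemma Si_eq_integral {T : ℝ} (hT : 0 < T) :
    Si T = ∫ u in Ioi (0:ℝ),
      (1 - Real.exp (-(u*T)) * (Real.cos T + u * Real.sin T)) / (1 + u^2) := by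
  have hswap : ∫ s in Ioc (0:ℝ) T, ∫ u in Ioi (0:ℝ), Real.sin s * Real.exp (-(u*s))
      = ∫ u in Ioi (0:ℝ), ∫ s in Ioc (0:ℝ) T, Real.sin s * Real.exp (-(u*s)) := by
    have hcont : Continuous (Function.uncurry
        (fun (s u : ℝ) => Real.sin s * Real.exp (-(u*s)))) := by
      apply Continuous.mul
      · exact Real.continuous_sin.comp continuous_fst
      · exact Real.continuous_exp.comp (continuous_snd.mul continuous_fst).neg
    have hint : Integrable (Function.uncurry (fun (s u : ℝ) => Real.sin s * Real.exp (-(u*s))))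
        ((volume.restrict (Ioc (0:ℝ) T)).prod (volume.restrict (Ioi (0:ℝ)))) := by
      rw [MeasureTheory.integrable_prod_iff hcont.aestronglyMeasurable]
      refine ⟨?_, ?_⟩
      · filter_upwards [ae_restrict_mem measurableSet_Ioc] with s hs
        have h0 : IntegrableOn (fun u : ℝ => Real.exp (-s * u)) (Ioi (0:ℝ)) :=
          exp_neg_integrableOn_Ioi 0 hs.1
        have h0' : IntegrableOn (fun u : ℝ => Real.sin s * Real.exp (-s * u))
            (Ioi (0:ℝ)) := h0.const_mul _
        have h1 : IntegrableOn (fun u : ℝ => Real.sin s * Real.exp (-(u*s)))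
            (Ioi (0:ℝ)) :=
          h0'.congr_fun (fun u _ => by beta_reduce; rw [neg_mul, mul_comm s u]) measurableSet_Ioi
        exact h1
      · have heq : ∀ᵐ s ∂(volume.restrict (Ioc (0:ℝ) T)),
            (∫ u in Ioi (0:ℝ), ‖Real.sin s * Real.exp (-(u*s))‖) = |Real.sin s| / s := by
          filter_upwards [ae_restrict_mem measurableSet_Ioc] with s hs
          have : ∀ u : ℝ, ‖Real.sin s * Real.exp (-(u*s))‖
              = |Real.sin s| * Real.exp (-(u*s)) := by
            intro u
            rw [norm_mul, Real.norm_eq_abs, Real.norm_eq_abs,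
              abs_of_pos (Real.exp_pos _)]
          simp_rw [this]
          rw [integral_const_mul, integral_exp_neg_Ioi_mul hs.1]
          ring
        have hbig : Integrable (fun s : ℝ => |Real.sin s| / s)
            (volume.restrict (Ioc (0:ℝ) T)) := by
          apply Integrable.mono' (g := fun _ => (1:ℝ)) (integrable_const 1)
          · exact ((Real.measurable_sin.abs).div measurable_id).aestronglyMeasurable
          · filter_upwards with s
            rw [Real.norm_eq_abs, abs_div, abs_abs]
            simpa [abs_div] using sinc_abs_le_one s
        exact hbig.congr (heq.mono fun s h => h.symm)
    exact MeasureTheory.integral_integral_swap hint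
  have h1 : Si T = ∫ s in Ioc (0:ℝ) T, ∫ u in Ioi (0:ℝ), Real.sin s * Real.exp (-(u*s)) := by
    rw [Si, intervalIntegral.integral_of_le hT.le]
    apply setIntegral_congr_fun measurableSet_Ioc
    intro s hs
    exact sinc_eq_integral hs.1
  rw [h1, hswap]
  apply setIntegral_congr_fun measurableSet_Ioi
  intro u _
  show (∫ s in Ioc (0:ℝ) T, Real.sin s * Real.exp (-(u*s))) = _
  rw [← intervalIntegral.integral_of_le hT.le, integral_sin_mul_exp]

/-- The Dirichlet integral: `Si T → π/2`. -/
lemma Si_tendsto : Tendsto Si atTop (nhds (π/2)) := by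
  have hval : (∫ u in Ioi (0:ℝ), (1 + u^2)⁻¹) = π/2 := by
    rw [integral_Ioi_inv_one_add_sq]; simp
  have key : Tendsto (fun T : ℝ => ∫ u in Ioi (0:ℝ),
      (1 - Real.exp (-(u*T)) * (Real.cos T + u * Real.sin T)) / (1 + u^2)) atTop
      (nhds (∫ u in Ioi (0:ℝ), (1 + u^2)⁻¹)) := by
    apply MeasureTheory.tendsto_integral_filter_of_dominated_convergence
      (bound := fun u : ℝ => 2 * (1 + u^2)⁻¹)
    · filter_upwards with T
      apply Continuous.aestronglyMeasurable
      apply Continuous.div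
      · exact continuous_const.sub ((Real.continuous_exp.comp
          ((continuous_id.mul continuous_const).neg)).mul
          (continuous_const.add (continuous_id.mul continuous_const)))
      · exact continuous_const.add (continuous_pow 2)
      · intro u; positivity
    · filter_upwards [eventually_ge_atTop (1:ℝ)] with T hT
      filter_upwards [ae_restrict_mem measurableSet_Ioi] with u hu
      have hu0 : (0:ℝ) < u := hu
      have hd : (0:ℝ) < 1 + u^2 := by positivity
      rw [Real.norm_eq_abs, abs_div, abs_of_pos hd, div_le_iff₀ hd]
      have hexp : Real.exp (-(u*T)) ≤ Real.exp (-u) := by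
        apply Real.exp_le_exp.mpr
        nlinarith
      have h2 : |Real.exp (-(u*T)) * (Real.cos T + u * Real.sin T)| ≤ 1 := by
        rw [abs_mul, abs_of_pos (Real.exp_pos _)]
        have hcs : |Real.cos T + u * Real.sin T| ≤ 1 + u := by
          calc |Real.cos T + u * Real.sin T| ≤ |Real.cos T| + |u * Real.sin T| := abs_add_le _ _
            _ ≤ 1 + u := by
              gcongr
              · exact Real.abs_cos_le_one T
              · rw [abs_mul, abs_of_pos hu0]
                calc u * |Real.sin T| ≤ u * 1 := by
                      gcongr; exact Real.abs_sin_le_one T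
                  _ = u := mul_one u
        calc Real.exp (-(u*T)) * |Real.cos T + u * Real.sin T|
            ≤ Real.exp (-u) * (1 + u) := by
              apply mul_le_mul hexp hcs (abs_nonneg _) (Real.exp_pos _).le
          _ ≤ 1 := by
              rw [Real.exp_neg, inv_mul_le_iff₀ (Real.exp_pos _)]
              nlinarith [Real.add_one_le_exp u]
      calc |1 - Real.exp (-(u*T)) * (Real.cos T + u * Real.sin T)|
          ≤ 1 + |Real.exp (-(u*T)) * (Real.cos T + u * Real.sin T)| := by
            calc _ ≤ |(1:ℝ)| + |Real.exp (-(u*T)) * (Real.cos T + u * Real.sin T)| :=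
                  abs_sub _ _
              _ = _ := by rw [abs_one]
        _ ≤ 2 := by linarith
        _ = 2 * (1 + u^2)⁻¹ * (1 + u^2) := by field_simp
    · exact (integrable_inv_one_add_sq.const_mul 2).restrict
    · filter_upwards [ae_restrict_mem measurableSet_Ioi] with u hu
      have hu0 : (0:ℝ) < u := hu
      have hE : Tendsto (fun T : ℝ => Real.exp (-(u*T)) * (Real.cos T + u * Real.sin T))
          atTop (nhds 0) := by
        apply squeeze_zero_norm (a := fun T => Real.exp (-(u*T)) * (1+u))
        · intro T
          rw [Real.norm_eq_abs, abs_mul, abs_of_pos (Real.exp_pos _)]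
          gcongr
          calc |Real.cos T + u * Real.sin T| ≤ |Real.cos T| + |u * Real.sin T| := abs_add_le _ _
            _ ≤ 1 + u := by
              gcongr
              · exact Real.abs_cos_le_one T
              · rw [abs_mul, abs_of_pos hu0]
                calc u * |Real.sin T| ≤ u * 1 := by
                      gcongr; exact Real.abs_sin_le_one T
                  _ = u := mul_one u
        · have : Tendsto (fun T : ℝ => Real.exp (-(u*T))) atTop (nhds 0) := by
            apply Real.tendsto_exp_atBot.comp
            exact tendsto_neg_atBot_iff.mpr (tendsto_id.const_mul_atTop hu0)
          simpa using this.mul_const (1+u)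
      have : Tendsto (fun T : ℝ =>
          (1 - Real.exp (-(u*T)) * (Real.cos T + u * Real.sin T)) / (1 + u^2)) atTop
          (nhds ((1 - 0) / (1 + u^2))) :=
        ((tendsto_const_nhds.sub hE)).div_const _
      simpa using this
  rw [← hval]
  apply key.congr'
  filter_upwards [eventually_gt_atTop (0:ℝ)] with T hT
  exact (Si_eq_integral hT).symm

/-- `Si` is bounded on the nonnegative half line. -/
lemma Si_bounded : ∃ C : ℝ, 0 < C ∧ ∀ T : ℝ, 0 ≤ T → |Si T| ≤ C := by
  have h := Si_tendsto
  rw [Metric.tendsto_atTop] at h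
  obtain ⟨M, hM⟩ := h 1 one_pos
  obtain ⟨C, hC⟩ := (isCompact_Icc (a := (0:ℝ)) (b := M)).exists_bound_of_continuousOn
    Si_continuous.continuousOn
  refine ⟨max C (|π/2| + 1), lt_of_lt_of_le (by positivity) (le_max_right _ _), ?_⟩
  intro T hT
  rcases le_or_gt T M with hTM | hTM
  · exact le_trans (by simpa using hC T ⟨hT, hTM⟩) (le_max_left _ _)
  · have := hM T hTM.le
    rw [Real.dist_eq] at this
    have : |Si T| ≤ |π/2| + 1 := by
      calc |Si T| = |(Si T - π/2) + π/2| := by ring_nf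
        _ ≤ |Si T - π/2| + |π/2| := abs_add_le _ _
        _ ≤ |π/2| + 1 := by linarith
    exact le_trans this (le_max_right _ _)

lemma intervalIntegral_sinc_pos {ε T : ℝ} (hε : 0 < ε) (hT : ε ≤ T) {u : ℝ} (hu : 0 < u) :
    ∫ s in ε..T, Real.sin (s*u) / s = Si (T*u) - Si (ε*u) := by
  have h1 : ∫ s in ε..T, Real.sin (s*u) / s
      = ∫ s in ε..T, u * ((fun r => Real.sin r / r) (s*u)) := by
    apply intervalIntegral.integral_congr
    intro s hs
    rw [uIcc_of_le hT] at hs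
    have hs0 : (0:ℝ) < s := lt_of_lt_of_le hε hs.1
    have : s * u ≠ 0 := by positivity
    field_simp
  have h2 := intervalIntegral.integral_comp_mul_right (a := ε) (b := T)
    (fun r => Real.sin r / r) (ne_of_gt hu)
  rw [h1, intervalIntegral.integral_const_mul, h2]
  rw [smul_eq_mul, ← mul_assoc, mul_inv_cancel₀ (ne_of_gt hu), one_mul]
  rw [← intervalIntegral.integral_interval_sub_left (sinc_intervalIntegrable 0 (T*u))
    (sinc_intervalIntegrable 0 (ε*u))]
  rfl

lemma intervalIntegral_sinc_eq {ε T : ℝ} (hε : 0 < ε) (hT : ε ≤ T) (u : ℝ) :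
    ∫ s in ε..T, Real.sin (s*u) / s = Real.sign u * (Si (T*|u|) - Si (ε*|u|)) := by
  rcases lt_trichotomy u 0 with hu | hu | hu
  · have habs : |u| = -u := abs_of_neg hu
    have key := intervalIntegral_sinc_pos hε hT (u := -u) (by linarith)
    have : ∫ s in ε..T, Real.sin (s*u) / s = -∫ s in ε..T, Real.sin (s*(-u)) / s := by
      rw [← intervalIntegral.integral_neg]
      apply intervalIntegral.integral_congr
      intro s _
      simp [neg_div]
    rw [this, key, Real.sign_of_neg hu, habs]
    ring
  · simp [hu, Real.sign_zero]
  · rw [abs_of_pos hu, Real.sign_of_pos hu, intervalIntegral_sinc_pos hε hT hu]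
    ring

/-- Pointwise limit of truncated sine integrals. -/
lemma tendsto_sinc_integral (u : ℝ) :
    Tendsto (fun n : ℕ => ∫ s in (((n:ℝ)+1)⁻¹)..((n:ℝ)+1), Real.sin (s*u) / s) atTop
      (nhds (π/2 * Real.sign u)) := by
  have hform : ∀ n : ℕ, ∫ s in (((n:ℝ)+1)⁻¹)..((n:ℝ)+1), Real.sin (s*u) / s
      = Real.sign u * (Si (((n:ℝ)+1)*|u|) - Si ((((n:ℝ)+1)⁻¹)*|u|)) := by
    intro n
    have hn : (0:ℝ) < (n:ℝ)+1 := by positivity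
    have h1 : (1:ℝ) ≤ (n:ℝ)+1 := by simp
    exact intervalIntegral_sinc_eq (by positivity)
      (le_trans (inv_le_one_of_one_le₀ h1) h1) u
  simp only [hform]
  rcases eq_or_ne u 0 with hu | hu
  · simp [hu, Real.sign_zero]
  · have habs : 0 < |u| := abs_pos.mpr hu
    have l1 : Tendsto (fun n : ℕ => Si (((n:ℝ)+1)*|u|)) atTop (nhds (π/2)) := by
      apply Si_tendsto.comp
      apply Tendsto.atTop_mul_const habs
      exact tendsto_atTop_add_const_right _ _ tendsto_natCast_atTop_atTop
    have l2 : Tendsto (fun n : ℕ => Si ((((n:ℝ)+1)⁻¹)*|u|)) atTop (nhds 0) := by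
      rw [← Si_zero]
      apply (Si_continuous.tendsto 0).comp
      have : Tendsto (fun n : ℕ => (((n:ℝ)+1)⁻¹)) atTop (nhds 0) := by
        apply Tendsto.inv_tendsto_atTop
        exact tendsto_atTop_add_const_right _ _ tendsto_natCast_atTop_atTop
      simpa using this.mul_const |u|
    have := ((l1.sub l2).const_mul (Real.sign u))
    simpa [mul_comm] using this

/-- Uniform bound on truncated sine integrals. -/
lemma sinc_integral_bound {C : ℝ} (hC : ∀ T : ℝ, 0 ≤ T → |Si T| ≤ C)
    {ε T : ℝ} (hε : 0 < ε) (hT : ε ≤ T) (u : ℝ) :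
    |∫ s in ε..T, Real.sin (s*u) / s| ≤ 2*C := by
  rw [intervalIntegral_sinc_eq hε hT u, abs_mul]
  have h1 : |Real.sign u| ≤ 1 := by
    rcases lt_trichotomy u 0 with h | h | h
    · simp [Real.sign_of_neg h]
    · simp [h, Real.sign_zero]
    · simp [Real.sign_of_pos h]
  have h2 : |Si (T*|u|) - Si (ε*|u|)| ≤ 2*C := by
    calc |Si (T*|u|) - Si (ε*|u|)| ≤ |Si (T*|u|)| + |Si (ε*|u|)| := abs_sub _ _
      _ ≤ C + C := by
          have hT0 : (0:ℝ) ≤ T := le_trans hε.le hT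
          gcongr
          · exact hC _ (mul_nonneg hT0 (abs_nonneg u))
          · exact hC _ (mul_nonneg hε.le (abs_nonneg u))
      _ = 2*C := by ring
  calc |Real.sign u| * |Si (T*|u|) - Si (ε*|u|)| ≤ 1 * (2*C) :=
        mul_le_mul h1 h2 (abs_nonneg _) one_pos.le
    _ = 2*C := one_mul _

lemma measurable_sign : Measurable Real.sign := by
  have : Real.sign = fun r : ℝ => if r < 0 then (-1:ℝ) else if 0 < r then 1 else 0 := by
    funext r; rfl
  rw [this]
  exact Measurable.ite (measurableSet_lt measurable_id measurable_const)
    measurable_const (Measurable.ite (measurableSet_lt measurable_const measurable_id)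
      measurable_const measurable_const)

lemma abs_int_le (f : ℝ → ℝ) (ρ : Measure ℝ) : |∫ x, f x ∂ρ| ≤ ∫ x, |f x| ∂ρ := by
  simpa [Real.norm_eq_abs] using norm_integral_le_integral_norm (μ := ρ) f

lemma exp_mul_eq (s t x : ℝ) :
    Complex.exp (-(Complex.I * s * t)) * Complex.exp (Complex.I * (s:ℂ) * (x:ℂ))
      = Complex.exp (((s*(x-t) : ℝ) : ℂ) * Complex.I) := by
  rw [← Complex.exp_add]
  congr 1
  push_cast
  ring

lemma integrable_cexp (μ : Measure ℝ) [IsProbabilityMeasure μ] (s t : ℝ) :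
    Integrable (fun x : ℝ => Complex.exp (((s*(x-t) : ℝ) : ℂ) * Complex.I)) μ := by
  apply Integrable.mono' (g := fun _ => (1:ℝ)) (integrable_const 1)
  · apply Continuous.aestronglyMeasurable
    apply Complex.continuous_exp.comp
    apply Continuous.mul _ continuous_const
    exact Complex.continuous_ofReal.comp
      (continuous_const.mul (continuous_id.sub continuous_const))
  · filter_upwards with x
    rw [Complex.norm_exp_ofReal_mul_I]

lemma integral_sin_eq_im (μ : Measure ℝ) [IsProbabilityMeasure μ] (s t : ℝ) :
    ∫ x, Real.sin (s*(x-t)) ∂μ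
      = (Complex.exp (-(Complex.I * s * t))
          * ∫ x, Complex.exp (Complex.I * (s:ℂ) * (x:ℂ)) ∂μ).im := by
  rw [← integral_const_mul]
  have hcong : ∫ x, Complex.exp (-(Complex.I * s * t))
        * Complex.exp (Complex.I * (s:ℂ) * (x:ℂ)) ∂μ
      = ∫ x, Complex.exp (((s*(x-t) : ℝ) : ℂ) * Complex.I) ∂μ :=
    integral_congr_ae (Filter.Eventually.of_forall fun x => exp_mul_eq s t x)
  rw [hcong]
  have him := (Complex.imCLM.integral_comp_comm (integrable_cexp μ s t)).symm
  simp only [Complex.imCLM_apply] at him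
  rw [him]
  apply integral_congr_ae
  filter_upwards with x
  rw [Complex.exp_ofReal_mul_I_im]

lemma abs_exp_neg_Ist (s t : ℝ) :
    ‖Complex.exp (-(Complex.I * s * t))‖ = 1 := by
  rw [Complex.norm_exp]
  norm_num [Complex.mul_re, Complex.I_re, Complex.I_im]

lemma abs_integral_sin_le (μ : Measure ℝ) [IsProbabilityMeasure μ] (s t : ℝ) :
    |∫ x, Real.sin (s*(x-t)) ∂μ| ≤ ‖∫ x, Complex.exp (Complex.I * (s:ℂ) * (x:ℂ)) ∂μ‖ := by
  rw [integral_sin_eq_im μ s t]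
  calc |(Complex.exp (-(Complex.I * s * t))
        * ∫ x, Complex.exp (Complex.I * (s:ℂ) * (x:ℂ)) ∂μ).im|
      ≤ ‖Complex.exp (-(Complex.I * s * t))
        * ∫ x, Complex.exp (Complex.I * (s:ℂ) * (x:ℂ)) ∂μ‖ := Complex.abs_im_le_norm _
    _ = ‖∫ x, Complex.exp (Complex.I * (s:ℂ) * (x:ℂ)) ∂μ‖ := by
        rw [norm_mul, abs_exp_neg_Ist, one_mul]

lemma abs_integral_sin_sub_le (μ ν : Measure ℝ) [IsProbabilityMeasure μ]
    [IsProbabilityMeasure ν] (s t : ℝ) :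
    |(∫ x, Real.sin (s*(x-t)) ∂μ) - ∫ x, Real.sin (s*(x-t)) ∂ν|
      ≤ ‖(∫ x, Complex.exp (Complex.I * (s:ℂ) * (x:ℂ)) ∂μ)
          - ∫ x, Complex.exp (Complex.I * (s:ℂ) * (x:ℂ)) ∂ν‖ := by
  rw [integral_sin_eq_im μ s t, integral_sin_eq_im ν s t, ← Complex.sub_im, ← mul_sub]
  calc |(Complex.exp (-(Complex.I * s * t))
        * ((∫ x, Complex.exp (Complex.I * (s:ℂ) * (x:ℂ)) ∂μ)
          - ∫ x, Complex.exp (Complex.I * (s:ℂ) * (x:ℂ)) ∂ν)).im|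
      ≤ ‖Complex.exp (-(Complex.I * s * t))
        * ((∫ x, Complex.exp (Complex.I * (s:ℂ) * (x:ℂ)) ∂μ)
          - ∫ x, Complex.exp (Complex.I * (s:ℂ) * (x:ℂ)) ∂ν)‖ := Complex.abs_im_le_norm _
    _ = _ := by rw [norm_mul, abs_exp_neg_Ist, one_mul]

lemma integral_sign_eq (μ : Measure ℝ) [IsProbabilityMeasure μ] (t : ℝ) (ht : μ {t} = 0) :
    ∫ x, Real.sign (x - t) ∂μ = 1 - 2*(μ (Iic t)).toReal := by
  have hne : ∀ᵐ x ∂μ, x ≠ t := by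
    rw [ae_iff]
    convert ht using 2
    ext x; simp
  have hae : ∀ᵐ x ∂μ, Real.sign (x - t)
      = (Ioi t).indicator (fun _ => (1:ℝ)) x - (Iic t).indicator (fun _ => (1:ℝ)) x := by
    filter_upwards [hne] with x hx
    rcases lt_or_gt_of_ne hx with h | h
    · rw [Real.sign_of_neg (by linarith),
        indicator_of_notMem (by simp only [mem_Ioi, not_lt]; exact h.le),
        indicator_of_mem (show x ∈ Iic t from h.le)]
      norm_num
    · rw [Real.sign_of_pos (by linarith),
        indicator_of_mem (show x ∈ Ioi t from h),
        indicator_of_notMem (by simp only [mem_Iic, not_le]; exact h)]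
      norm_num
  rw [integral_congr_ae hae,
    integral_sub ((integrable_const (1:ℝ)).indicator measurableSet_Ioi)
      ((integrable_const (1:ℝ)).indicator measurableSet_Iic),
    integral_indicator_const _ measurableSet_Ioi,
    integral_indicator_const _ measurableSet_Iic]
  have hcompl : μ (Ioi t) = 1 - μ (Iic t) := by
    rw [← compl_Iic]
    exact prob_compl_eq_one_sub measurableSet_Iic
  have h1 : μ (Iic t) ≤ 1 := prob_le_one
  rw [measureReal_def, measureReal_def]
  rw [hcompl, smul_eq_mul, smul_eq_mul, mul_one, mul_one,
    ENNReal.toReal_sub_of_le h1 ENNReal.one_ne_top]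
  simp only [ENNReal.toReal_one]
  ring

lemma continuous_integral_sin (μ : Measure ℝ) [IsProbabilityMeasure μ] (t : ℝ) :
    Continuous (fun s : ℝ => ∫ x, Real.sin (s*(x-t)) ∂μ) := by
  apply continuous_of_dominated (bound := fun _ => (1:ℝ))
  · intro s
    exact (Real.continuous_sin.comp
      (continuous_const.mul (continuous_id.sub continuous_const))).aestronglyMeasurable
  · intro s
    filter_upwards with x
    rw [Real.norm_eq_abs]
    exact Real.abs_sin_le_one _
  · exact integrable_const 1
  · filter_upwards with x
    exact Real.continuous_sin.comp (continuous_id.mul continuous_const)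

lemma fubini_step (μ : Measure ℝ) [IsProbabilityMeasure μ] (t : ℝ) {ε T : ℝ}
    (hε : 0 < ε) (hT : ε ≤ T) :
    ∫ s in Ioc ε T, (∫ x, Real.sin (s*(x-t)) ∂μ) / s
      = ∫ x, (∫ s in Ioc ε T, Real.sin (s*(x-t)) / s) ∂μ := by
  haveI : IsFiniteMeasure (volume.restrict (Ioc ε T)) :=
    ⟨by rw [Measure.restrict_apply_univ]; exact measure_Ioc_lt_top⟩
  have hmeas : Measurable (fun p : ℝ × ℝ => Real.sin (p.1*(p.2-t)) / p.1) := by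
    apply Measurable.div
    · exact (Real.continuous_sin.comp
        (continuous_fst.mul (continuous_snd.sub continuous_const))).measurable
    · exact measurable_fst
  have hint : Integrable (Function.uncurry (fun s x => Real.sin (s*(x-t)) / s))
      ((volume.restrict (Ioc ε T)).prod μ) := by
    apply Integrable.mono' (g := fun _ => ε⁻¹) (integrable_const _)
    · exact hmeas.aestronglyMeasurable
    · have hprod : (volume.restrict (Ioc ε T)).prod μ
          = (volume.prod μ).restrict ((Ioc ε T) ×ˢ univ) := by
        conv_lhs => rw [← Measure.restrict_univ (μ := μ)]
        exact Measure.prod_restrict _ _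
      rw [hprod]
      filter_upwards [ae_restrict_mem (measurableSet_Ioc.prod MeasurableSet.univ)] with p hp
      have hs0 : 0 < p.1 := lt_of_lt_of_le hε hp.1.1.le
      show ‖Real.sin (p.1*(p.2-t)) / p.1‖ ≤ ε⁻¹
      rw [Real.norm_eq_abs, abs_div, abs_of_pos hs0]
      calc |Real.sin (p.1*(p.2-t))| / p.1 ≤ 1 / p.1 := by
            gcongr
            exact Real.abs_sin_le_one _
        _ ≤ 1 / ε := by gcongr; exact hp.1.1.le
        _ = ε⁻¹ := one_div _
  have h1 : ∫ s in Ioc ε T, (∫ x, Real.sin (s*(x-t)) ∂μ) / s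
      = ∫ s in Ioc ε T, ∫ x, Real.sin (s*(x-t)) / s ∂μ := by
    apply setIntegral_congr_fun measurableSet_Ioc
    intro s _
    show ((∫ x, Real.sin (s*(x-t)) ∂μ) / s) = ∫ x, Real.sin (s*(x-t)) / s ∂μ
    exact (integral_div s fun x => Real.sin (s*(x-t))).symm
  rw [h1]
  exact MeasureTheory.integral_integral_swap hint

end GilPelaezAux

theorem charFun_smoothing_cdf_bound
    (μ ν : Measure ℝ) [IsProbabilityMeasure μ] [IsProbabilityMeasure ν]
    (q : ℝ) (hq : 0 < q)
    (h1 : IntegrableOn (fun s : ℝ =>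
      ‖(∫ x, Complex.exp (Complex.I * (s : ℂ) * (x : ℂ)) ∂μ)
        - (∫ x, Complex.exp (Complex.I * (s : ℂ) * (x : ℂ)) ∂ν)‖ / s)
      (Set.Ioc 0 q) volume)
    (h2 : IntegrableOn (fun s : ℝ =>
      (‖∫ x, Complex.exp (Complex.I * (s : ℂ) * (x : ℂ)) ∂μ‖
        + ‖∫ x, Complex.exp (Complex.I * (s : ℂ) * (x : ℂ)) ∂ν‖) / s)
      (Set.Ioi q) volume) :
    ∀ t : ℝ, μ {t} = 0 → ν {t} = 0 →
      |(μ (Set.Iic t)).toReal - (ν (Set.Iic t)).toReal| ≤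
        (1 / Real.pi) * (∫ s in Set.Ioc (0:ℝ) q,
          ‖(∫ x, Complex.exp (Complex.I * (s : ℂ) * (x : ℂ)) ∂μ)
            - (∫ x, Complex.exp (Complex.I * (s : ℂ) * (x : ℂ)) ∂ν)‖ / s)
        + (1 / Real.pi) * (∫ s in Set.Ioi q,
          (‖∫ x, Complex.exp (Complex.I * (s : ℂ) * (x : ℂ)) ∂μ‖
            + ‖∫ x, Complex.exp (Complex.I * (s : ℂ) * (x : ℂ)) ∂ν‖) / s) := by
  intro t hμt hνt
  classical
  obtain ⟨C, hC0, hC⟩ := GilPelaezAux.Si_bounded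
  set a : ℝ → ℝ := fun s => ∫ x, Real.sin (s*(x-t)) ∂μ with ha
  set b : ℝ → ℝ := fun s => ∫ x, Real.sin (s*(x-t)) ∂ν with hb
  set g : ℝ → ℝ := fun s => (a s - b s) / s with hg
  have hπ : (0:ℝ) < Real.pi := Real.pi_pos
  -- measurability
  have hacont : Continuous a := GilPelaezAux.continuous_integral_sin μ t
  have hbcont : Continuous b := GilPelaezAux.continuous_integral_sin ν t
  have hgmeas : Measurable g := ((hacont.sub hbcont).measurable).div measurable_id
  -- bounds for a, b
  have habs_a : ∀ s : ℝ, |a s| ≤ 1 := by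
    intro s
    rw [ha]
    calc |∫ x, Real.sin (s*(x-t)) ∂μ| ≤ ∫ x, |Real.sin (s*(x-t))| ∂μ :=
          GilPelaezAux.abs_int_le _ _
      _ ≤ ∫ _x, (1:ℝ) ∂μ := by
          apply integral_mono_of_nonneg (Filter.Eventually.of_forall fun x => abs_nonneg _)
            (integrable_const 1)
          filter_upwards with x
          exact Real.abs_sin_le_one _
      _ = 1 := by simp
  have habs_b : ∀ s : ℝ, |b s| ≤ 1 := by
    intro s
    rw [hb]
    calc |∫ x, Real.sin (s*(x-t)) ∂ν| ≤ ∫ x, |Real.sin (s*(x-t))| ∂ν :=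
          GilPelaezAux.abs_int_le _ _
      _ ≤ ∫ _x, (1:ℝ) ∂ν := by
          apply integral_mono_of_nonneg (Filter.Eventually.of_forall fun x => abs_nonneg _)
            (integrable_const 1)
          filter_upwards with x
          exact Real.abs_sin_le_one _
      _ = 1 := by simp
  -- pointwise bound of g by the characteristic function differences
  have hbound1 : ∀ s ∈ Ioc (0:ℝ) q, |g s| ≤
      ‖(∫ x, Complex.exp (Complex.I * (s : ℂ) * (x : ℂ)) ∂μ)
        - (∫ x, Complex.exp (Complex.I * (s : ℂ) * (x : ℂ)) ∂ν)‖ / s := by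
    intro s hs
    rw [hg, abs_div, abs_of_pos hs.1]
    apply div_le_div_of_nonneg_right ?_ hs.1.le |>.trans_eq rfl
    exact GilPelaezAux.abs_integral_sin_sub_le μ ν s t
  have hbound2 : ∀ s ∈ Ioi q, |g s| ≤
      (‖∫ x, Complex.exp (Complex.I * (s : ℂ) * (x : ℂ)) ∂μ‖
        + ‖∫ x, Complex.exp (Complex.I * (s : ℂ) * (x : ℂ)) ∂ν‖) / s := by
    intro s hs
    have hs0 : (0:ℝ) < s := lt_trans hq hs
    rw [hg, abs_div, abs_of_pos hs0]
    gcongr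
    calc |a s - b s| ≤ |a s| + |b s| := abs_sub _ _
      _ ≤ _ := by
          gcongr
          · exact GilPelaezAux.abs_integral_sin_le μ s t
          · exact GilPelaezAux.abs_integral_sin_le ν s t
  -- integrability of g on (0, ∞)
  have hint1 : IntegrableOn g (Ioc (0:ℝ) q) := by
    apply h1.mono' hgmeas.aestronglyMeasurable.restrict
    filter_upwards [ae_restrict_mem measurableSet_Ioc] with s hs
    rw [Real.norm_eq_abs]
    exact hbound1 s hs
  have hint2 : IntegrableOn g (Ioi q) := by
    apply h2.mono' hgmeas.aestronglyMeasurable.restrict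
    filter_upwards [ae_restrict_mem measurableSet_Ioi] with s hs
    rw [Real.norm_eq_abs]
    exact hbound2 s hs
  have hgint : IntegrableOn g (Ioi (0:ℝ)) := by
    rw [← Ioc_union_Ioi_eq_Ioi hq.le]
    exact hint1.union hint2
  -- the truncation sequence
  set ε : ℕ → ℝ := fun n => ((n:ℝ)+1)⁻¹ with hε
  set T : ℕ → ℝ := fun n => (n:ℝ)+1 with hT
  have hε0 : ∀ n, 0 < ε n := fun n => by positivity
  have hεT : ∀ n, ε n ≤ T n := fun n =>
    le_trans (inv_le_one_of_one_le₀ (by simp)) (by simp [hT])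
  -- Claim C : convergence of truncated integrals of g to the full integral
  have hmono : Monotone (fun n : ℕ => Ioc (ε n) (T n)) := by
    intro n m hnm
    apply Ioc_subset_Ioc
    · apply inv_anti₀ (by positivity)
      simp only [add_le_add_iff_right, Nat.cast_le]
      exact hnm
    · simp only [hT, add_le_add_iff_right, Nat.cast_le]
      exact hnm
  have hunion : (⋃ n, Ioc (ε n) (T n)) = Ioi (0:ℝ) := by
    ext u
    simp only [mem_iUnion, mem_Ioc, mem_Ioi]
    constructor
    · rintro ⟨n, hn1, -⟩
      exact lt_trans (hε0 n) hn1
    · intro hu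
      obtain ⟨n, hn⟩ := exists_nat_gt (max u⁻¹ u)
      refine ⟨n, ?_, ?_⟩
      · have h1 : u⁻¹ < (n:ℝ)+1 := lt_trans (lt_of_le_of_lt (le_max_left _ _) hn) (by linarith)
        rw [hε]
        rw [inv_lt_comm₀ (by positivity) hu]
        exact h1
      · have h2 : u < (n:ℝ)+1 := lt_trans (lt_of_le_of_lt (le_max_right _ _) hn) (by linarith)
        rw [hT]
        exact h2.le
  have claimC : Tendsto (fun n : ℕ => ∫ s in Ioc (ε n) (T n), g s) atTop
      (nhds (∫ s in Ioi (0:ℝ), g s)) := by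
    have := tendsto_setIntegral_of_monotone (fun n : ℕ => measurableSet_Ioc) hmono
      (by rw [hunion]; exact hgint)
    rwa [hunion] at this
  -- Claim A : Fubini for each truncation
  have hrepr : ∀ (n : ℕ) (x : ℝ), (∫ s in Ioc (ε n) (T n), Real.sin (s*(x-t)) / s)
      = Real.sign (x-t) * (GilPelaezAux.Si (T n * |x-t|) - GilPelaezAux.Si (ε n * |x-t|)) := by
    intro n x
    rw [← intervalIntegral.integral_of_le (hεT n)]
    exact GilPelaezAux.intervalIntegral_sinc_eq (hε0 n) (hεT n) (x-t)
  have hψbound : ∀ (n : ℕ) (x : ℝ),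
      |Real.sign (x-t) * (GilPelaezAux.Si (T n * |x-t|) - GilPelaezAux.Si (ε n * |x-t|))|
        ≤ 2*C := by
    intro n x
    rw [← hrepr n x, ← intervalIntegral.integral_of_le (hεT n)]
    exact GilPelaezAux.sinc_integral_bound hC (hε0 n) (hεT n) (x-t)
  have hψmeas : ∀ n : ℕ, Measurable (fun x : ℝ =>
      Real.sign (x-t) * (GilPelaezAux.Si (T n * |x-t|) - GilPelaezAux.Si (ε n * |x-t|))) := by
    intro n
    apply Measurable.mul
    · exact GilPelaezAux.measurable_sign.comp (measurable_id.sub measurable_const)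
    · apply Measurable.sub
      · exact (GilPelaezAux.Si_continuous.measurable).comp
          ((measurable_id.sub measurable_const).abs.const_mul _)
      · exact (GilPelaezAux.Si_continuous.measurable).comp
          ((measurable_id.sub measurable_const).abs.const_mul _)
  have hψlim : ∀ x : ℝ, Tendsto (fun n : ℕ =>
      Real.sign (x-t) * (GilPelaezAux.Si (T n * |x-t|) - GilPelaezAux.Si (ε n * |x-t|)))
      atTop (nhds (π/2 * Real.sign (x-t))) := by
    intro x
    have := GilPelaezAux.tendsto_sinc_integral (x-t)
    apply this.congr
    intro n
    rw [intervalIntegral.integral_of_le (hεT n), hrepr n x]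
  -- Claim B : limit of the inner integrals, for each measure
  have claimB : ∀ (ρ : Measure ℝ), IsProbabilityMeasure ρ → ρ {t} = 0 →
      Tendsto (fun n : ℕ => ∫ x, (∫ s in Ioc (ε n) (T n), Real.sin (s*(x-t)) / s) ∂ρ) atTop
        (nhds (π/2 * (1 - 2*(ρ (Iic t)).toReal))) := by
    intro ρ hρ hρt
    have hval : ∫ x, π/2 * Real.sign (x-t) ∂ρ = π/2 * (1 - 2*(ρ (Iic t)).toReal) := by
      rw [integral_const_mul]
      congr 1
      exact GilPelaezAux.integral_sign_eq ρ t hρt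
    rw [← hval]
    have hDCT := MeasureTheory.tendsto_integral_filter_of_dominated_convergence
      (μ := ρ) (l := (atTop : Filter ℕ))
      (F := fun n x => Real.sign (x-t)
        * (GilPelaezAux.Si (T n * |x-t|) - GilPelaezAux.Si (ε n * |x-t|)))
      (f := fun x => π/2 * Real.sign (x-t)) (bound := fun _ => 2*C)
      (Filter.Eventually.of_forall fun n => (hψmeas n).aestronglyMeasurable)
      (Filter.Eventually.of_forall fun n =>
        Filter.Eventually.of_forall fun x => by
          rw [Real.norm_eq_abs]; exact hψbound n x)
      (integrable_const _)
      (Filter.Eventually.of_forall fun x => hψlim x)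
    apply hDCT.congr
    intro n
    apply integral_congr_ae
    filter_upwards with x
    rw [hrepr n x]
  -- combine Fubini with claim B
  have claimA : ∀ n : ℕ, ∫ s in Ioc (ε n) (T n), g s
      = (∫ x, (∫ s in Ioc (ε n) (T n), Real.sin (s*(x-t)) / s) ∂μ)
        - ∫ x, (∫ s in Ioc (ε n) (T n), Real.sin (s*(x-t)) / s) ∂ν := by
    intro n
    have hia : IntegrableOn (fun s => a s / s) (Ioc (ε n) (T n)) := by
      apply Integrable.mono' (g := fun _ => (ε n)⁻¹) (integrable_const _)
      · exact (hacont.measurable.div measurable_id).aestronglyMeasurable.restrict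
      · filter_upwards [ae_restrict_mem measurableSet_Ioc] with s hs
        have hs0 : 0 < s := lt_trans (hε0 n) hs.1
        rw [Real.norm_eq_abs, abs_div, abs_of_pos hs0]
        calc |a s| / s ≤ 1 / s := by gcongr; exact habs_a s
          _ ≤ 1 / (ε n) := by gcongr; exact hs.1.le
          _ = (ε n)⁻¹ := one_div _
    have hib : IntegrableOn (fun s => b s / s) (Ioc (ε n) (T n)) := by
      apply Integrable.mono' (g := fun _ => (ε n)⁻¹) (integrable_const _)
      · exact (hbcont.measurable.div measurable_id).aestronglyMeasurable.restrict
      · filter_upwards [ae_restrict_mem measurableSet_Ioc] with s hs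
        have hs0 : 0 < s := lt_trans (hε0 n) hs.1
        rw [Real.norm_eq_abs, abs_div, abs_of_pos hs0]
        calc |b s| / s ≤ 1 / s := by gcongr; exact habs_b s
          _ ≤ 1 / (ε n) := by gcongr; exact hs.1.le
          _ = (ε n)⁻¹ := one_div _
    have hsplit : ∫ s in Ioc (ε n) (T n), g s
        = (∫ s in Ioc (ε n) (T n), a s / s) - ∫ s in Ioc (ε n) (T n), b s / s := by
      rw [← integral_sub hia hib]
      apply setIntegral_congr_fun measurableSet_Ioc
      intro s _
      rw [hg]
      exact sub_div _ _ _
    rw [hsplit, GilPelaezAux.fubini_step μ t (hε0 n) (hεT n),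
      GilPelaezAux.fubini_step ν t (hε0 n) (hεT n)]
  -- identify the limit
  have hlim2 : Tendsto (fun n : ℕ => ∫ s in Ioc (ε n) (T n), g s) atTop
      (nhds (π/2 * (1 - 2*(μ (Iic t)).toReal) - π/2 * (1 - 2*(ν (Iic t)).toReal))) := by
    have := (claimB μ inferInstance hμt).sub (claimB ν inferInstance hνt)
    apply this.congr
    intro n
    exact (claimA n).symm
  have hkey : ∫ s in Ioi (0:ℝ), g s
      = π/2 * (1 - 2*(μ (Iic t)).toReal) - π/2 * (1 - 2*(ν (Iic t)).toReal) :=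
    tendsto_nhds_unique claimC hlim2
  -- final bound
  have hFdiff : (μ (Set.Iic t)).toReal - (ν (Set.Iic t)).toReal
      = -(∫ s in Ioi (0:ℝ), g s) / Real.pi := by
    rw [hkey]
    field_simp
    ring
  rw [hFdiff, abs_div, abs_neg, abs_of_pos hπ]
  have hsum : |∫ s in Ioi (0:ℝ), g s| ≤
      (∫ s in Set.Ioc (0:ℝ) q,
          ‖(∫ x, Complex.exp (Complex.I * (s : ℂ) * (x : ℂ)) ∂μ)
            - (∫ x, Complex.exp (Complex.I * (s : ℂ) * (x : ℂ)) ∂ν)‖ / s)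
        + ∫ s in Set.Ioi q,
          (‖∫ x, Complex.exp (Complex.I * (s : ℂ) * (x : ℂ)) ∂μ‖
            + ‖∫ x, Complex.exp (Complex.I * (s : ℂ) * (x : ℂ)) ∂ν‖) / s := by
    calc |∫ s in Ioi (0:ℝ), g s| ≤ ∫ s in Ioi (0:ℝ), |g s| := by
          simpa [Real.norm_eq_abs] using
            norm_integral_le_integral_norm (μ := volume.restrict (Ioi (0:ℝ))) g
      _ = (∫ s in Ioc (0:ℝ) q, |g s|) + ∫ s in Ioi q, |g s| := by
          rw [← setIntegral_union (Ioc_disjoint_Ioi le_rfl) measurableSet_Ioi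
            hint1.abs hint2.abs, Ioc_union_Ioi_eq_Ioi hq.le]
      _ ≤ _ := by
          apply add_le_add
          · exact setIntegral_mono_on hint1.abs h1 measurableSet_Ioc hbound1
          · exact setIntegral_mono_on hint2.abs h2 measurableSet_Ioi hbound2
  calc |∫ s in Ioi (0:ℝ), g s| / Real.pi ≤
      ((∫ s in Set.Ioc (0:ℝ) q,
          ‖(∫ x, Complex.exp (Complex.I * (s : ℂ) * (x : ℂ)) ∂μ)
            - (∫ x, Complex.exp (Complex.I * (s : ℂ) * (x : ℂ)) ∂ν)‖ / s)
        + ∫ s in Set.Ioi q,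
          (‖∫ x, Complex.exp (Complex.I * (s : ℂ) * (x : ℂ)) ∂μ‖
            + ‖∫ x, Complex.exp (Complex.I * (s : ℂ) * (x : ℂ)) ∂ν‖) / s) / Real.pi := by
        apply div_le_div_of_nonneg_right hsum hπ.le |>.trans_eq rfl
    _ = _ := by ring
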